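/- For all n ≥ 0, all coefficient sequences a, b, and all m ≥ 0, the n-th ψ-derivative of the Ward product satisfies the general ψ-Leibniz rule (Dⁿ(a·b))ₘ = Σ_{k=0}^{n} Σ_{l=0}^{m} C(n,k)(m,l) · binomψ(m,l) · (D^{n−k}a)_l · (D^{k}b)_{m−l}. -/

import Mathlib

open Finset

/-- The ψ-factorial: ψₙ! = ψ₁ψ₂⋯ψₙ, with ψ₀! = 1. -/
noncomputable def psiFact (ψ : ℕ → ℂ) : ℕ → ℂ
  | 0 => 1
  | n + 1 => psiFact ψ n * ψ (n + 1)

/-- The ψ-binomial coefficient binomψ(n,k) = ψₙ!/(ψₖ!·ψ_{n−k}!). -/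
noncomputable def psiBinom (ψ : ℕ → ℂ) (n k : ℕ) : ℂ :=
  psiFact ψ n / (psiFact ψ k * psiFact ψ (n - k))

/-- The Fontané numbers F(n,k) = (ψₙ − ψₖ)/ψ_{n−k}. -/
noncomputable def Fker (ψ : ℕ → ℂ) (n k : ℕ) : ℂ :=
  (ψ n - ψ k) / ψ (n - k)

/-- The Ward product of coefficient sequences. -/
noncomputable def wardMul (ψ : ℕ → ℂ) (a b : ℕ → ℂ) (n : ℕ) : ℂ :=
  ∑ k ∈ Finset.range (n + 1), psiBinom ψ n k * a k * b (n - k)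

/-- The ψ-derivative on coefficient sequences: the shift (D a)ₙ = a_{n+1}. -/
def Dpsi (a : ℕ → ℂ) (n : ℕ) : ℂ := a (n + 1)

/-- The binomial-operator kernels C(n,k)(m,l) of the binomial operators ⟨n k⟩∗. -/
noncomputable def Cker (ψ : ℕ → ℂ) : ℕ → ℕ → ℕ → ℕ → ℂ
  | _, 0, _, _ => 1
  | 0, _ + 1, _, _ => 0
  | n + 1, k + 1, m, l =>
      if k = n then ∏ i ∈ Finset.range (n + 1), Fker ψ (m + i + 1) l
      else Cker ψ n (k + 1) (m + 1) (l + 1) + Fker ψ (m + 1) l * Cker ψ n k (m + 1) l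

lemma cker_zero (ψ : ℕ → ℂ) (n m l : ℕ) : Cker ψ n 0 m l = 1 := by
  cases n <;> simp [Cker]

lemma cker_succ_succ (ψ : ℕ → ℂ) (n k m l : ℕ) (h : k ≠ n) :
    Cker ψ (n+1) (k+1) m l
      = Cker ψ n (k+1) (m+1) (l+1) + Fker ψ (m+1) l * Cker ψ n k (m+1) l := by
  simp [Cker, h]

lemma cker_diag (ψ : ℕ → ℂ) (n m l : ℕ) :
    Cker ψ (n+1) (n+1) m l = ∏ i ∈ Finset.range (n+1), Fker ψ (m + i + 1) l := by
  simp [Cker]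

lemma dpsi_iter (f : ℕ → ℂ) (n i : ℕ) : Dpsi^[n] f i = f (i + n) := by
  induction n generalizing f i with
  | zero => simp
  | succ n ih => rw [Function.iterate_succ_apply, ih]; rfl

lemma psiFact_ne_zero (ψ : ℕ → ℂ) (hψ : ∀ n : ℕ, 1 ≤ n → ψ n ≠ 0) :
    ∀ n, psiFact ψ n ≠ 0
  | 0 => one_ne_zero
  | n+1 => mul_ne_zero (psiFact_ne_zero ψ hψ n) (hψ (n+1) (by omega))
lemma fker_self (ψ : ℕ → ℂ) (j : ℕ) : Fker ψ j j = 0 := by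
  simp [Fker]

lemma fker_zero (ψ : ℕ → ℂ) (hψ0 : ψ 0 = 0) (hψ : ∀ n : ℕ, 1 ≤ n → ψ n ≠ 0) (m : ℕ) :
    Fker ψ (m+1) 0 = 1 := by
  rw [Fker, hψ0, sub_zero, Nat.sub_zero, div_self (hψ (m+1) (by omega))]

lemma psiBinom_zero (ψ : ℕ → ℂ) (hψ : ∀ n : ℕ, 1 ≤ n → ψ n ≠ 0) (m : ℕ) :
    psiBinom ψ m 0 = 1 := by
  rw [psiBinom, psiFact, one_mul, Nat.sub_zero, div_self (psiFact_ne_zero ψ hψ m)]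

lemma psiBinom_self (ψ : ℕ → ℂ) (hψ : ∀ n : ℕ, 1 ≤ n → ψ n ≠ 0) (m : ℕ) :
    psiBinom ψ m m = 1 := by
  rw [psiBinom, Nat.sub_self]
  rw [show psiFact ψ 0 = 1 from rfl, mul_one, div_self (psiFact_ne_zero ψ hψ m)]

lemma pascal (ψ : ℕ → ℂ) (hψ : ∀ n : ℕ, 1 ≤ n → ψ n ≠ 0) (m l : ℕ) (hl : l ≤ m) :
    psiBinom ψ (m+1) (l+1)
      = psiBinom ψ m l + Fker ψ (m+1) (l+1) * psiBinom ψ m (l+1) := by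
  rcases eq_or_lt_of_le hl with rfl | h
  · rw [psiBinom_self ψ hψ, psiBinom_self ψ hψ, fker_self, zero_mul, add_zero]
  · obtain ⟨j, rfl⟩ : ∃ j, m = l + j + 1 := ⟨m - l - 1, by omega⟩
    have e1 : l+j+1+1-(l+1) = j+1 := by omega
    have e2 : l+j+1-l = j+1 := by omega
    have e3 : l+j+1-(l+1) = j := by omega
    rw [psiBinom, psiBinom, psiBinom, Fker, e1, e2, e3]
    rw [show psiFact ψ (l+j+1+1) = psiFact ψ (l+j+1) * ψ (l+j+1+1) from rfl,
      show psiFact ψ (l+1) = psiFact ψ l * ψ (l+1) from rfl,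
      show psiFact ψ (j+1) = psiFact ψ j * ψ (j+1) from rfl]
    have gen : ∀ X M L J fl fj : ℂ, fl ≠ 0 → fj ≠ 0 → L ≠ 0 → J ≠ 0 →
        X*M/(fl*L*(fj*J)) = X/(fl*(fj*J)) + (M-L)/J*(X/(fl*L*fj)) := by
      intro X M L J fl fj h1 h2 h3 h4
      rw [div_mul_div_comm,
        div_add_div _ _ (mul_ne_zero h1 (mul_ne_zero h2 h4)) (mul_ne_zero h4 (mul_ne_zero (mul_ne_zero h1 h3) h2)),
        div_eq_div_iff (mul_ne_zero (mul_ne_zero h1 h3) (mul_ne_zero h2 h4))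
          (mul_ne_zero (mul_ne_zero h1 (mul_ne_zero h2 h4)) (mul_ne_zero h4 (mul_ne_zero (mul_ne_zero h1 h3) h2)))]
      ring
    exact gen _ _ _ _ _ _ (psiFact_ne_zero ψ hψ l) (psiFact_ne_zero ψ hψ j)
      (hψ (l+1) (by omega)) (hψ (j+1) (by omega))

/-- Inner sum of the double expansion. -/
noncomputable def Iterm (ψ a b : ℕ → ℂ) (n m k : ℕ) : ℂ :=
  ∑ l ∈ Finset.range (m+1), Cker ψ n k m l * psiBinom ψ m l * a (l+(n-k)) * b (m-l+k)

noncomputable def Aterm (ψ a b : ℕ → ℂ) (n m k : ℕ) : ℂ :=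
  ∑ l ∈ Finset.range (m+1), Cker ψ n k (m+1) (l+1) * psiBinom ψ m l * a (l+1+(n-k)) * b (m-l+k)

noncomputable def Eterm (ψ a b : ℕ → ℂ) (n m k : ℕ) : ℂ :=
  ∑ l ∈ Finset.range (m+1+1),
    Fker ψ (m+1) l * Cker ψ n k (m+1) l * psiBinom ψ m l * a (l+(n-k)) * b (m+1-l+k)

lemma Eterm_eq (ψ a b : ℕ → ℂ) (n m k : ℕ) :
    Eterm ψ a b n m k = ∑ l ∈ Finset.range (m+1),
      Fker ψ (m+1) l * Cker ψ n k (m+1) l * psiBinom ψ m l * a (l+(n-k)) * b (m+1-l+k) := by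
  rw [Eterm, Finset.sum_range_succ, fker_self]
  ring

lemma step1 (ψ : ℕ → ℂ) (hψ0 : ψ 0 = 0) (hψ : ∀ n : ℕ, 1 ≤ n → ψ n ≠ 0)
    (a b : ℕ → ℂ) (n m k : ℕ) :
    Iterm ψ a b n (m+1) k = Aterm ψ a b n m k + Eterm ψ a b n m k := by
  have hI : Iterm ψ a b n (m+1) k
      = ∑ l ∈ Finset.range (m+1),
          Cker ψ n k (m+1) (l+1) * psiBinom ψ (m+1) (l+1) * a (l+1+(n-k)) * b (m+1-(l+1)+k)
        + Cker ψ n k (m+1) 0 * psiBinom ψ (m+1) 0 * a (0+(n-k)) * b (m+1-0+k) := by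
    rw [Iterm, Finset.sum_range_succ']
  have hE : Eterm ψ a b n m k
      = ∑ l ∈ Finset.range (m+1),
          Fker ψ (m+1) (l+1) * Cker ψ n k (m+1) (l+1) * psiBinom ψ m (l+1) * a (l+1+(n-k))
            * b (m+1-(l+1)+k)
        + Fker ψ (m+1) 0 * Cker ψ n k (m+1) 0 * psiBinom ψ m 0 * a (0+(n-k)) * b (m+1-0+k) := by
    rw [Eterm, Finset.sum_range_succ']
  rw [hI, hE, Aterm]
  have h0 : Cker ψ n k (m+1) 0 * psiBinom ψ (m+1) 0 * a (0+(n-k)) * b (m+1-0+k)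
      = Fker ψ (m+1) 0 * Cker ψ n k (m+1) 0 * psiBinom ψ m 0 * a (0+(n-k)) * b (m+1-0+k) := by
    rw [fker_zero ψ hψ0 hψ, psiBinom_zero ψ hψ, psiBinom_zero ψ hψ]
    ring
  have hsplit : ∀ l ∈ Finset.range (m+1),
      Cker ψ n k (m+1) (l+1) * psiBinom ψ (m+1) (l+1) * a (l+1+(n-k)) * b (m+1-(l+1)+k)
      = Cker ψ n k (m+1) (l+1) * psiBinom ψ m l * a (l+1+(n-k)) * b (m-l+k)
        + Fker ψ (m+1) (l+1) * Cker ψ n k (m+1) (l+1) * psiBinom ψ m (l+1) * a (l+1+(n-k))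
            * b (m+1-(l+1)+k) := by
    intro l hl
    have hlm : l ≤ m := by simpa using Nat.lt_succ_iff.mp (Finset.mem_range.mp hl)
    have hb : m+1-(l+1) = m - l := by omega
    rw [pascal ψ hψ m l hlm, hb]
    ring
  rw [Finset.sum_congr rfl hsplit, Finset.sum_add_distrib, h0]
  ring

lemma cker_diag_succ (ψ : ℕ → ℂ) (n m l : ℕ) :
    Cker ψ (n+1) (n+1) m l = Fker ψ (m+1) l * Cker ψ n n (m+1) l := by
  cases n with
  | zero => simp [Cker]
  | succ n =>
    rw [cker_diag, cker_diag, Finset.prod_range_succ']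
    have : ∀ i, Fker ψ (m + (i+1) + 1) l = Fker ψ (m + 1 + i + 1) l := by
      intro i; congr 1; omega
    rw [Finset.prod_congr rfl fun i _ => this i]
    simp only [Nat.add_zero]
    ring

lemma step2 (ψ : ℕ → ℂ) (a b : ℕ → ℂ) (n m k : ℕ) (hk : k < n) :
    Iterm ψ a b (n+1) m (k+1) = Aterm ψ a b n m (k+1) + Eterm ψ a b n m k := by
  rw [Iterm, Aterm, Eterm_eq]
  rw [← Finset.sum_add_distrib]
  refine Finset.sum_congr rfl fun l hl => ?_
  have hlm : l ≤ m := Nat.lt_succ_iff.mp (Finset.mem_range.mp hl)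
  rw [cker_succ_succ ψ n k m l (by omega)]
  rw [show l + (n+1-(k+1)) = l + (n-k) from by omega,
    show l + 1 + (n-(k+1)) = l + (n-k) from by omega,
    show m + 1 - l + k = m - l + (k+1) from by omega]
  ring

lemma step3 (ψ : ℕ → ℂ) (a b : ℕ → ℂ) (n m : ℕ) :
    Iterm ψ a b (n+1) m (n+1) = Eterm ψ a b n m n := by
  rw [Iterm, Eterm_eq]
  refine Finset.sum_congr rfl fun l hl => ?_
  have hlm : l ≤ m := Nat.lt_succ_iff.mp (Finset.mem_range.mp hl)
  rw [cker_diag_succ,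
    show l + (n+1-(n+1)) = l + (n-n) from by omega,
    show m + 1 - l + n = m - l + (n+1) from by omega]

lemma step4 (ψ : ℕ → ℂ) (a b : ℕ → ℂ) (n m : ℕ) :
    Iterm ψ a b (n+1) m 0 = Aterm ψ a b n m 0 := by
  rw [Iterm, Aterm]
  refine Finset.sum_congr rfl fun l hl => ?_
  have h : l + (n+1-0) = l + 1 + (n-0) := by omega
  rw [cker_zero, cker_zero, h]

lemma key (ψ : ℕ → ℂ) (hψ0 : ψ 0 = 0) (hψ : ∀ n : ℕ, 1 ≤ n → ψ n ≠ 0)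
    (a b : ℕ → ℂ) (n m : ℕ) :
    ∑ k ∈ Finset.range (n+1+1), Iterm ψ a b (n+1) m k
      = ∑ k ∈ Finset.range (n+1), Iterm ψ a b n (m+1) k := by
  have h1 : ∑ k ∈ Finset.range n, Iterm ψ a b (n+1) m (k+1)
      = ∑ k ∈ Finset.range n, (Aterm ψ a b n m (k+1) + Eterm ψ a b n m k) :=
    Finset.sum_congr rfl fun k hk => step2 ψ a b n m k (Finset.mem_range.mp hk)
  have h2 : ∑ k ∈ Finset.range (n+1), Iterm ψ a b n (m+1) k
      = ∑ k ∈ Finset.range (n+1), (Aterm ψ a b n m k + Eterm ψ a b n m k) :=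
    Finset.sum_congr rfl fun k _ => step1 ψ hψ0 hψ a b n m k
  calc ∑ k ∈ Finset.range (n+1+1), Iterm ψ a b (n+1) m k
      = ∑ k ∈ Finset.range (n+1), Iterm ψ a b (n+1) m (k+1) + Iterm ψ a b (n+1) m 0 :=
        Finset.sum_range_succ' _ _
    _ = (∑ k ∈ Finset.range n, Iterm ψ a b (n+1) m (k+1) + Iterm ψ a b (n+1) m (n+1))
          + Iterm ψ a b (n+1) m 0 := by rw [Finset.sum_range_succ]
    _ = (∑ k ∈ Finset.range n, (Aterm ψ a b n m (k+1) + Eterm ψ a b n m k)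
          + Eterm ψ a b n m n) + Aterm ψ a b n m 0 := by rw [h1, step3, step4]
    _ = ∑ k ∈ Finset.range (n+1), (Aterm ψ a b n m k + Eterm ψ a b n m k) := by
        rw [Finset.sum_add_distrib, Finset.sum_add_distrib,
          Finset.sum_range_succ (fun k => Eterm ψ a b n m k) n,
          Finset.sum_range_succ' (fun k => Aterm ψ a b n m k) n]
        ring
    _ = ∑ k ∈ Finset.range (n+1), Iterm ψ a b n (m+1) k := h2.symm

lemma full (ψ : ℕ → ℂ) (hψ0 : ψ 0 = 0) (hψ : ∀ n : ℕ, 1 ≤ n → ψ n ≠ 0)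
    (a b : ℕ → ℂ) (n : ℕ) : ∀ m : ℕ,
    wardMul ψ a b (m+n) = ∑ k ∈ Finset.range (n+1), Iterm ψ a b n m k := by
  induction n with
  | zero =>
    intro m
    simp [wardMul, Iterm, cker_zero]
  | succ n ih =>
    intro m
    rw [show m + (n+1) = (m+1) + n from by omega, ih (m+1), ← key ψ hψ0 hψ a b n m]

/-- Leibniz's general ψ-rule: the n-th ψ-derivative of the Ward product expands via
the binomial-operator kernels C(n,k). -/
theorem general_psi_leibniz (ψ : ℕ → ℂ) (hψ0 : ψ 0 = 0) (hψ1 : ψ 1 = 1) (hψ : ∀ n : ℕ, 1 ≤ n → ψ n ≠ 0)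
    (n : ℕ) (a b : ℕ → ℂ) (m : ℕ) :
    (Dpsi^[n] (wardMul ψ a b)) m
      = ∑ k ∈ Finset.range (n + 1), ∑ l ∈ Finset.range (m + 1),
          Cker ψ n k m l * psiBinom ψ m l * (Dpsi^[n - k] a) l * (Dpsi^[k] b) (m - l) := by
  simp only [dpsi_iter]
  rw [full ψ hψ0 hψ a b n m]
  exact Finset.sum_congr rfl fun k _ => rfl
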